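/- Let z_1,…,z_{2n} be a representation of the quantum quaternion sphere relations on a complex Hilbert space H, and write ω = z_{2n}* z_{2n}. Then for every m ∈ ℕ the spectrum of the (positive, self-adjoint) operator ω contains no point of the open interval (q^{2m+2}, q^{2m}); equivalently, the spectral projection 1_{(q^{2m+2}, q^{2m})}(ω) is zero for all m ∈ ℕ. -/

import Mathlib

noncomputable section

variable {H : Type*} [NormedAddCommGroup H] [InnerProductSpace ℂ H] [CompleteSpace H]

/-- The adjoint of a bounded operator on a complex Hilbert space. -/
def adj (T : H →L[ℂ] H) : H →L[ℂ] H := ContinuousLinearMap.adjoint T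

/-- `i′ = 2n + 1 − i`. -/
def dualIdx (n i : ℕ) : ℕ := 2 * n + 1 - i

/-- `ρ_i = n + 1 − i` for `i ≤ n`, and `ρ_i = n − i` (that is, `−ρ_{i′}`) for `i > n`. -/
def rhoIdx (n i : ℕ) : ℤ := if i ≤ n then (n : ℤ) + 1 - (i : ℤ) else (n : ℤ) - (i : ℤ)

/-- `ε_i = 1` for `i ≤ n`, `ε_i = −1` for `i > n`. -/
def epsIdx (n i : ℕ) : ℤ := if i ≤ n then 1 else -1

/-- A representation of the quantum quaternion sphere relations on a complex Hilbert
space `H`: bounded operators `z 1, …, z (2n)` satisfying relations (R1)–(R8). -/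
structure QQSRep (q : ℝ) (n : ℕ) (z : ℕ → H →L[ℂ] H) : Prop where
  r1 : ∀ i j, 1 ≤ j → j < i → i ≤ 2 * n → i + j ≠ 2 * n + 1 →
      z i * z j = (q : ℂ) • (z j * z i)
  r2 : ∀ i, n < i → i ≤ 2 * n →
      z i * z (dualIdx n i) = ((q : ℂ) ^ 2) • (z (dualIdx n i) * z i)
        - ((1 - q ^ 2 : ℝ) : ℂ) • ∑ k ∈ Finset.Ioc i (2 * n),
            ((q : ℂ) ^ ((i : ℤ) - (k : ℤ))) • (z k * z (dualIdx n k))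
  r3 : ∀ i, 1 ≤ i → i ≤ 2 * n →
      adj (z i) * z (dualIdx n i) = ((q : ℂ) ^ 2) • (z (dualIdx n i) * adj (z i))
  r4 : ∀ i j, 1 ≤ i → i ≤ 2 * n → 1 ≤ j → j ≤ 2 * n → 2 * n + 1 < i + j → i ≠ j →
      adj (z i) * z j = (q : ℂ) • (z j * adj (z i))
  r5 : ∀ i j, 1 ≤ i → 1 ≤ j → i + j < 2 * n + 1 → i ≠ j →
      adj (z i) * z j = (q : ℂ) • (z j * adj (z i))
        + (((1 - q ^ 2 : ℝ) : ℂ) * ((epsIdx n i * epsIdx n j : ℤ) : ℂ)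
            * (q : ℂ) ^ (rhoIdx n i + rhoIdx n j)) • (z (dualIdx n i) * adj (z (dualIdx n j)))
  r6 : ∀ i, n < i → i ≤ 2 * n →
      adj (z i) * z i = z i * adj (z i)
        + ((1 - q ^ 2 : ℝ) : ℂ) • ∑ k ∈ Finset.Ioc i (2 * n), z k * adj (z k)
  r7 : ∀ i, 1 ≤ i → i ≤ n →
      adj (z i) * z i = z i * adj (z i)
        + (((1 - q ^ 2 : ℝ) : ℂ) * (q : ℂ) ^ (2 * rhoIdx n i)) •
            (z (dualIdx n i) * adj (z (dualIdx n i)))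
        + ((1 - q ^ 2 : ℝ) : ℂ) • ∑ k ∈ Finset.Ioc i (2 * n), z k * adj (z k)
  r8 : ∑ i ∈ Finset.Icc 1 (2 * n), z i * adj (z i) = 1

/-- Irreducibility: the only closed subspaces invariant under all `z i` and `(z i)*`
are `{0}` and `H`. -/
def QQSIrreducible (n : ℕ) (z : ℕ → H →L[ℂ] H) : Prop :=
  ∀ K : Submodule ℂ H, IsClosed (K : Set H) →
    (∀ i, 1 ≤ i → i ≤ 2 * n → ∀ h ∈ K, z i h ∈ K ∧ adj (z i) h ∈ K) →
    K = ⊥ ∨ K = ⊤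


local notation "⟪" x ", " y "⟫" => @inner ℂ _ _ x y

lemma adj_eq_star (T : H →L[ℂ] H) : adj T = star T :=
  (ContinuousLinearMap.star_eq_adjoint T).symm

lemma isUnit_of_selfAdjoint_bddBelow (A : H →L[ℂ] H) (hA : IsSelfAdjoint A)
    (c : ℝ) (hc : 0 < c) (h : ∀ ξ : H, c * ‖ξ‖ ≤ ‖A ξ‖) : IsUnit A := by
  have hbd : ∀ ξ : H, ‖ξ‖ ≤ (⟨c⁻¹, by positivity⟩ : NNReal) * ‖A ξ‖ := by
    intro ξ
    have hcc : ((⟨c⁻¹, by positivity⟩ : NNReal) : ℝ) = c⁻¹ := rfl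
    rw [hcc, le_inv_mul_iff₀ hc]
    exact h ξ
  have hanti : AntilipschitzWith _ A := A.antilipschitz_of_bound hbd
  have hinj : Function.Injective A := hanti.injective
  have hclosed : IsClosed (Set.range A) := hanti.isClosed_range A.uniformContinuous
  have hadj : ContinuousLinearMap.adjoint A = A := hA.adjoint_eq
  rw [ContinuousLinearMap.isUnit_iff_bijective]
  refine ⟨hinj, ?_⟩
  set K : Submodule ℂ H := LinearMap.range (A : H →ₗ[ℂ] H) with hK
  have hKclosed : IsClosed (K : Set H) := by
    simpa [hK, LinearMap.coe_range] using hclosed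
  have horth : Kᗮ = ⊥ := by
    rw [Submodule.eq_bot_iff]
    intro y hy
    rw [Submodule.mem_orthogonal] at hy
    have hAy : A y = 0 := by
      have h1 : ∀ ξ : H, ⟪ξ, A y⟫ = 0 := by
        intro ξ
        have := hy (A ξ) ⟨ξ, rfl⟩
        rwa [← ContinuousLinearMap.adjoint_inner_right A, hadj] at this
      simpa using (inner_self_eq_zero.mp (h1 (A y)))
    apply hinj
    simpa using hAy
  haveI : CompleteSpace K := hKclosed.completeSpace_coe
  have hKtop : K = ⊤ := Submodule.orthogonal_eq_bot_iff.mp horth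
  intro w
  have : w ∈ K := hKtop ▸ Submodule.mem_top
  exact this

lemma comp_helper (Z W : H →L[ℂ] H) (a b : ℂ) (h1 : Z * W = a • (W * Z))
    (h2 : star Z * W = b • (W * star Z)) :
    (star Z * Z) * W = (a * b) • (W * (star Z * Z)) := by
  calc (star Z * Z) * W = star Z * (Z * W) := mul_assoc _ _ _
    _ = a • (star Z * (W * Z)) := by rw [h1, mul_smul_comm]
    _ = a • ((star Z * W) * Z) := by rw [mul_assoc]
    _ = a • ((b • (W * star Z)) * Z) := by rw [h2]
    _ = (a * b) • (W * (star Z * Z)) := by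
        rw [smul_mul_assoc, smul_smul, mul_assoc]

lemma star_twist (ω W : H →L[ℂ] H) (hω : star ω = ω) (c : ℂ) (hc : star c = c)
    (h : ω * W = c • (W * ω)) : star W * ω = c • (ω * star W) := by
  have := congrArg star h
  rw [star_mul, star_smul, star_mul, hω, hc] at this
  exact this

lemma twisted (ω W : H →L[ℂ] H) (c x : ℝ) (hc : 0 < c)
    (h : W * ω = ((c : ℝ) : ℂ) • (ω * W)) :
    (algebraMap ℂ (H →L[ℂ] H) ((x / c : ℝ) : ℂ) - ω) * W
      = (((c⁻¹ : ℝ)) : ℂ) • (W * (algebraMap ℂ (H →L[ℂ] H) ((x : ℝ) : ℂ) - ω)) := by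
  have hωW : ω * W = (((c⁻¹ : ℝ)) : ℂ) • (W * ω) := by
    rw [h, smul_smul]
    have : (((c⁻¹ : ℝ)) : ℂ) * ((c:ℝ):ℂ) = 1 := by
      push_cast
      field_simp
      exact div_self (by exact_mod_cast hc.ne')
    rw [this, one_smul]
  rw [sub_mul, mul_sub, Algebra.algebraMap_eq_smul_one, Algebra.algebraMap_eq_smul_one,
    smul_mul_assoc, one_mul, mul_smul_comm, mul_one, smul_sub, smul_smul, hωW]
  congr 1
  push_cast
  congr 1
  field_simp

lemma resolvent_bound (A : H →L[ℂ] H) (μ : ℂ) (h : μ ∉ spectrum ℂ A) :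
    ∃ C : ℝ, 0 ≤ C ∧ ∀ η : H, ‖η‖ ≤ C * ‖(algebraMap ℂ (H →L[ℂ] H) μ - A) η‖ := by
  rw [spectrum.notMem_iff] at h
  obtain ⟨u, hu⟩ := h
  refine ⟨‖(↑u⁻¹ : H →L[ℂ] H)‖, norm_nonneg _, fun η => ?_⟩
  have h1 : η = (↑u⁻¹ : H →L[ℂ] H) ((algebraMap ℂ (H →L[ℂ] H) μ - A) η) := by
    rw [← hu]
    have : (↑u⁻¹ * ↑u : H →L[ℂ] H) η = η := by rw [u.inv_mul]; rfl
    exact this.symm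
  calc ‖η‖ = ‖(↑u⁻¹ : H →L[ℂ] H) ((algebraMap ℂ (H →L[ℂ] H) μ - A) η)‖ := by rw [← h1]
    _ ≤ ‖(↑u⁻¹ : H →L[ℂ] H)‖ * ‖(algebraMap ℂ (H →L[ℂ] H) μ - A) η‖ :=
        ContinuousLinearMap.le_opNorm _ _

section RepFacts

variable {q : ℝ} {n : ℕ} {z : ℕ → H →L[ℂ] H}

lemma dual_two_n (n : ℕ) (hn : 1 ≤ n) : dualIdx n (2 * n) = 1 := by
  unfold dualIdx; omega

lemma QQSRep.omega_eq (hn : 1 ≤ n) (hz : QQSRep q n z) :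
    star (z (2 * n)) * z (2 * n) = z (2 * n) * star (z (2 * n))  := by
  have h := hz.r6 (2 * n) (by omega) le_rfl
  rw [adj_eq_star] at h
  simpa [Finset.Ioc_self] using h

lemma QQSRep.omega_star (hn : 1 ≤ n) (hz : QQSRep q n z) :
    star (star (z (2 * n)) * z (2 * n)) = star (z (2 * n)) * z (2 * n) := by
  rw [star_mul, star_star]

lemma QQSRep.intertwine (hn : 1 ≤ n) (hz : QQSRep q n z) (j : ℕ) (hj1 : 1 ≤ j)
    (hj2 : j < 2 * n) :
    star (z j) * (star (z (2 * n)) * z (2 * n)) =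
      (((if j = 1 then q ^ 4 else q ^ 2 : ℝ)) : ℂ) •
        ((star (z (2 * n)) * z (2 * n)) * star (z j)) := by
  by_cases hj : j = 1
  · subst hj
    have h1 : z (2 * n) * z 1 = ((q : ℂ) ^ 2) • (z 1 * z (2 * n)) := by
      have h := hz.r2 (2 * n) (by omega) le_rfl
      rw [dual_two_n n hn] at h
      simpa [Finset.Ioc_self] using h
    have h2 : star (z (2 * n)) * z 1 = ((q : ℂ) ^ 2) • (z 1 * star (z (2 * n))) := by
      have h := hz.r3 (2 * n) (by omega) le_rfl
      rw [adj_eq_star, dual_two_n n hn] at h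
      exact h
    have h3 := comp_helper (z (2 * n)) (z 1) _ _ h1 h2
    have h4 := star_twist _ _ (hz.omega_star hn) _ (by
      rw [show ((q:ℂ)^2 * (q:ℂ)^2) = ((q^2*q^2 : ℝ) : ℂ) by push_cast; ring,
        Complex.star_def, Complex.conj_ofReal]) h3
    have hco : (((if (1:ℕ) = 1 then q ^ 4 else q ^ 2 : ℝ)) : ℂ) = (q:ℂ)^2 * (q:ℂ)^2 := by
      rw [if_pos rfl]; push_cast; ring
    rw [hco]
    exact h4
  · have h1 : z (2 * n) * z j = (q : ℂ) • (z j * z (2 * n)) :=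
      hz.r1 (2 * n) j hj1 hj2 le_rfl (by omega)
    have h2 : star (z (2 * n)) * z j = (q : ℂ) • (z j * star (z (2 * n))) := by
      have h := hz.r4 (2 * n) j (by omega) le_rfl hj1 (by omega) (by omega) (by omega)
      rw [adj_eq_star] at h
      exact h
    have h3 := comp_helper (z (2 * n)) (z j) _ _ h1 h2
    have h4 := star_twist _ _ (hz.omega_star hn) _ (by
      rw [show ((q:ℂ) * (q:ℂ)) = ((q*q : ℝ) : ℂ) by push_cast; ring,
        Complex.star_def, Complex.conj_ofReal]) h3
    have hco : (((if j = 1 then q ^ 4 else q ^ 2 : ℝ)) : ℂ) = (q:ℂ) * (q:ℂ) := by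
      rw [if_neg hj]; push_cast; ring
    rw [hco]
    exact h4

lemma QQSRep.norm_sq_sum (hz : QQSRep q n z) (ξ : H) :
    ‖ξ‖ ^ 2 = ∑ j ∈ Finset.Icc 1 (2 * n), ‖star (z j) ξ‖ ^ 2 := by
  have h0 : ⟪ξ, ξ⟫ = ∑ j ∈ Finset.Icc 1 (2 * n), ⟪star (z j) ξ, star (z j) ξ⟫ := by
    calc ⟪ξ, ξ⟫ = ⟪ξ, (∑ j ∈ Finset.Icc 1 (2 * n), z j * adj (z j)) ξ⟫ := by
          rw [hz.r8]; simp
      _ = ∑ j ∈ Finset.Icc 1 (2 * n), ⟪ξ, (z j * adj (z j)) ξ⟫ := by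
          rw [ContinuousLinearMap.sum_apply, inner_sum]
      _ = ∑ j ∈ Finset.Icc 1 (2 * n), ⟪star (z j) ξ, star (z j) ξ⟫ := by
          refine Finset.sum_congr rfl fun j _ => ?_
          rw [adj_eq_star, ContinuousLinearMap.mul_apply,
            ContinuousLinearMap.star_eq_adjoint, ← ContinuousLinearMap.adjoint_inner_left,
            ← ContinuousLinearMap.star_eq_adjoint]
  have h1 := congrArg RCLike.re h0
  rw [map_sum] at h1
  rw [← inner_self_eq_norm_sq (𝕜 := ℂ) ξ, h1]
  exact Finset.sum_congr rfl fun j _ => inner_self_eq_norm_sq _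

lemma QQSRep.omega_inner (hn : 1 ≤ n) (hz : QQSRep q n z) (ξ : H) :
    ⟪ξ, (star (z (2 * n)) * z (2 * n)) ξ⟫ = ((‖star (z (2 * n)) ξ‖ : ℂ)) ^ 2 := by
  rw [hz.omega_eq hn]
  rw [ContinuousLinearMap.mul_apply, ← ContinuousLinearMap.adjoint_inner_left,
    ← ContinuousLinearMap.star_eq_adjoint]
  exact inner_self_eq_norm_sq_to_K _

lemma QQSRep.spec_gt_one (hn : 1 ≤ n) (hz : QQSRep q n z) (μ : ℝ) (hμ : 1 < μ) :
    (μ : ℂ) ∉ spectrum ℂ (star (z (2 * n)) * z (2 * n)) := by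
  set ω := star (z (2 * n)) * z (2 * n) with hω
  rw [spectrum.notMem_iff]
  set A := algebraMap ℂ (H →L[ℂ] H) (μ : ℂ) - ω with hA
  have hsa : IsSelfAdjoint A := by
    rw [IsSelfAdjoint, hA, star_sub]
    congr 1
    · simp [Algebra.algebraMap_eq_smul_one, star_smul, Complex.star_def,
        Complex.conj_ofReal]
    · exact hz.omega_star hn
  apply isUnit_of_selfAdjoint_bddBelow A hsa (μ - 1) (by linarith)
  intro ξ
  have hAξ : A ξ = (μ : ℂ) • ξ - ω ξ := by
    simp [hA, Algebra.algebraMap_eq_smul_one]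
  have h2' : ⟪ξ, A ξ⟫ = (((μ * ‖ξ‖ ^ 2 - ‖star (z (2 * n)) ξ‖ ^ 2 : ℝ)) : ℂ) := by
    rw [hAξ, inner_sub_right, inner_smul_right, hz.omega_inner hn,
      inner_self_eq_norm_sq_to_K]
    push_cast
    ring_nf
    first
    | rfl
    | norm_cast
  have h2 : RCLike.re ⟪ξ, A ξ⟫ = μ * ‖ξ‖ ^ 2 - ‖star (z (2 * n)) ξ‖ ^ 2 := by
    rw [h2']
    exact RCLike.ofReal_re _
  have h3 : ‖star (z (2 * n)) ξ‖ ^ 2 ≤ ‖ξ‖ ^ 2 := by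
    rw [hz.norm_sq_sum ξ]
    exact Finset.single_le_sum (f := fun j => ‖star (z j) ξ‖ ^ 2)
      (fun j _ => sq_nonneg _) (Finset.mem_Icc.mpr ⟨by omega, le_rfl⟩)
  have h4 : RCLike.re ⟪ξ, A ξ⟫ ≤ ‖ξ‖ * ‖A ξ‖ := re_inner_le_norm _ _
  have h5 : (μ - 1) * ‖ξ‖ ^ 2 ≤ ‖ξ‖ * ‖A ξ‖ := by nlinarith
  rcases ((eq_or_lt_of_le (norm_nonneg ξ)).imp_left Eq.symm) with h | h
  · rw [h, mul_zero]
    exact norm_nonneg _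
  · nlinarith [norm_nonneg (A ξ)]

end RepFacts

theorem stmt_5 (q : ℝ) (hq0 : 0 < q) (hq1 : q < 1) (n : ℕ) (hn : 1 ≤ n)
    (z : ℕ → H →L[ℂ] H) (hz : QQSRep q n z) :
    ∀ m : ℕ, ∀ x : ℝ, q ^ (2 * m + 2) < x → x < q ^ (2 * m) →
      (x : ℂ) ∉ spectrum ℂ (adj (z (2 * n)) * z (2 * n)) := by
  have hq2 : (0:ℝ) < q ^ 2 := by positivity
  have hq4 : (0:ℝ) < q ^ 4 := by positivity
  intro m
  induction m using Nat.strong_induction_on with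
  | _ m IH =>
    intro x hx1 hx2
    rw [adj_eq_star]
    have hx0 : 0 < x := lt_trans (by positivity) hx1
    have hxlt1 : x < 1 := lt_of_lt_of_le hx2 (pow_le_one₀ hq0.le hq1.le)
    set ω : H →L[ℂ] H := star (z (2 * n)) * z (2 * n) with hωdef
    have notmem : ∀ j, 1 ≤ j → j < 2 * n →
        (((x / (if j = 1 then q ^ 4 else q ^ 2) : ℝ)) : ℂ) ∉ spectrum ℂ ω := by
      intro j hj1 hj2
      by_cases hj : j = 1
      · rw [if_pos hj]
        rcases Nat.lt_or_ge m 2 with hm | hm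
        · apply hz.spec_gt_one hn
          rw [lt_div_iff₀ hq4]
          calc (1:ℝ) * q ^ 4 = q ^ 4 := one_mul _
            _ ≤ q ^ (2 * m + 2) := pow_le_pow_of_le_one hq0.le hq1.le (by omega)
            _ < x := hx1
        · have h := IH (m - 2) (by omega) (x / q ^ 4) ?_ ?_
          · rwa [adj_eq_star] at h
          · rw [lt_div_iff₀ hq4, ← pow_add]
            calc q ^ (2 * (m - 2) + 2 + 4) = q ^ (2 * m + 2) := by congr 1; omega
              _ < x := hx1
          · rw [div_lt_iff₀ hq4, ← pow_add]
            calc x < q ^ (2 * m) := hx2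
              _ = q ^ (2 * (m - 2) + 4) := by congr 1; omega
      · rw [if_neg hj]
        rcases Nat.eq_zero_or_pos m with hm | hm
        · apply hz.spec_gt_one hn
          rw [lt_div_iff₀ hq2]
          calc (1:ℝ) * q ^ 2 = q ^ 2 := one_mul _
            _ ≤ q ^ (2 * m + 2) := pow_le_pow_of_le_one hq0.le hq1.le (by omega)
            _ < x := hx1
        · have h := IH (m - 1) (by omega) (x / q ^ 2) ?_ ?_
          · rwa [adj_eq_star] at h
          · rw [lt_div_iff₀ hq2, ← pow_add]
            calc q ^ (2 * (m - 1) + 2 + 2) = q ^ (2 * m + 2) := by congr 1; omega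
              _ < x := hx1
          · rw [div_lt_iff₀ hq2, ← pow_add]
            calc x < q ^ (2 * m) := hx2
              _ = q ^ (2 * (m - 1) + 2) := by congr 1; omega
    set A : H →L[ℂ] H := algebraMap ℂ (H →L[ℂ] H) ((x : ℝ) : ℂ) - ω with hAdef
    have key : ∀ j, ∃ C : ℝ, 0 ≤ C ∧ (1 ≤ j → j < 2 * n → ∀ η : H,
        ‖star (z j) η‖ ≤ C * ‖A η‖) := by
      intro j
      by_cases hjc : 1 ≤ j ∧ j < 2 * n
      · obtain ⟨hj1, hj2⟩ := hjc
        set c : ℝ := if j = 1 then q ^ 4 else q ^ 2 with hcdef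
        have hc : 0 < c := by rw [hcdef]; split_ifs <;> positivity
        obtain ⟨C₀, hC₀, hC₀b⟩ := resolvent_bound ω (((x / c : ℝ)) : ℂ) (notmem j hj1 hj2)
        have hop := twisted ω (star (z j)) c x hc (hz.intertwine hn j hj1 hj2)
        refine ⟨C₀ * (c⁻¹ * ‖star (z j)‖), by positivity, fun _ _ η => ?_⟩
        have step2 : (algebraMap ℂ (H →L[ℂ] H) (((x / c : ℝ)) : ℂ) - ω) (star (z j) η)
            = (((c⁻¹ : ℝ)) : ℂ) • (star (z j) (A η)) := by
          have happ := congrFun (congrArg DFunLike.coe hop) η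
          simp only [ContinuousLinearMap.mul_apply, ContinuousLinearMap.smul_apply] at happ
          exact happ
        calc ‖star (z j) η‖
            ≤ C₀ * ‖(algebraMap ℂ (H →L[ℂ] H) (((x / c : ℝ)) : ℂ) - ω) (star (z j) η)‖ :=
              hC₀b _
          _ = C₀ * (c⁻¹ * ‖star (z j) (A η)‖) := by
              rw [step2, norm_smul]
              congr 2
              rw [Complex.norm_real]
              exact abs_of_pos (inv_pos.mpr hc)
          _ ≤ C₀ * (c⁻¹ * (‖star (z j)‖ * ‖A η‖)) := by
              apply mul_le_mul_of_nonneg_left _ hC₀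
              apply mul_le_mul_of_nonneg_left _ (inv_pos.mpr hc).le
              exact ContinuousLinearMap.le_opNorm _ _
          _ = C₀ * (c⁻¹ * ‖star (z j)‖) * ‖A η‖ := by ring
      · exact ⟨0, le_rfl, fun h1 h2 => absurd ⟨h1, h2⟩ hjc⟩
    choose C hC0 hCb using key
    obtain ⟨n', hn'⟩ : ∃ n', 2 * n = n' + 1 := ⟨2 * n - 1, by omega⟩
    set Ct := ∑ j ∈ Finset.Icc 1 n', (C j) ^ 2 with hCt
    have hCtnn : 0 ≤ Ct := Finset.sum_nonneg fun j _ => sq_nonneg _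
    have main : ∀ ξ : H, (1 - x) * ‖ξ‖ ^ 2 ≤ ‖A ξ‖ * ‖ξ‖ + Ct * ‖A ξ‖ ^ 2 := by
      intro ξ
      have hsum := hz.norm_sq_sum ξ
      rw [hn', Finset.sum_Icc_succ_top (by omega)] at hsum
      have hterm : ∀ j ∈ Finset.Icc 1 n', ‖star (z j) ξ‖ ^ 2 ≤ (C j) ^ 2 * ‖A ξ‖ ^ 2 := by
        intro j hjm
        rw [Finset.mem_Icc] at hjm
        have hb := hCb j hjm.1 (by omega) ξ
        calc ‖star (z j) ξ‖ ^ 2 ≤ (C j * ‖A ξ‖) ^ 2 := by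
              apply pow_le_pow_left₀ (norm_nonneg _) hb
          _ = (C j) ^ 2 * ‖A ξ‖ ^ 2 := by ring
      have hsum2 : ∑ j ∈ Finset.Icc 1 n', ‖star (z j) ξ‖ ^ 2 ≤ Ct * ‖A ξ‖ ^ 2 := by
        rw [hCt, Finset.sum_mul]
        exact Finset.sum_le_sum hterm
      have h2' : ⟪ξ, A ξ⟫ = (((x * ‖ξ‖ ^ 2 - ‖star (z (2 * n)) ξ‖ ^ 2 : ℝ)) : ℂ) := by
        have hAξ : A ξ = ((x : ℝ) : ℂ) • ξ - ω ξ := by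
          simp [hAdef, Algebra.algebraMap_eq_smul_one]
        rw [hAξ, inner_sub_right, inner_smul_right, hz.omega_inner hn,
          inner_self_eq_norm_sq_to_K]
        push_cast
        ring_nf
        first
        | rfl
        | norm_cast
      have h2 : RCLike.re ⟪ξ, A ξ⟫ = x * ‖ξ‖ ^ 2 - ‖star (z (2 * n)) ξ‖ ^ 2 := by
        rw [h2']
        exact RCLike.ofReal_re _
      have hb : -(‖ξ‖ * ‖A ξ‖) ≤ RCLike.re ⟪ξ, A ξ⟫ := by
        have ha1 : |RCLike.re ⟪ξ, A ξ⟫| ≤ ‖(⟪ξ, A ξ⟫ : ℂ)‖ := RCLike.abs_re_le_norm _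
        have ha2 : ‖(⟪ξ, A ξ⟫ : ℂ)‖ ≤ ‖ξ‖ * ‖A ξ‖ := norm_inner_le_norm _ _
        linarith [neg_abs_le (RCLike.re (⟪ξ, A ξ⟫ : ℂ))]
      have hlast : ‖star (z (n' + 1)) ξ‖ ^ 2 ≤ x * ‖ξ‖ ^ 2 + ‖ξ‖ * ‖A ξ‖ := by
        rw [show n' + 1 = 2 * n from hn'.symm]
        linarith
      nlinarith [hsum2, hlast, hsum, norm_nonneg (A ξ), norm_nonneg ξ]
    have h1x : (0:ℝ) < 1 - x := by linarith
    set δ := (1 - x) / (2 * (1 + Ct)) with hδ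
    have hδpos : 0 < δ := by
      rw [hδ]
      apply div_pos h1x
      positivity
    have hd : δ * (2 * (1 + Ct)) = 1 - x := by
      rw [hδ]
      field_simp
    have hbdd : ∀ ξ, δ * ‖ξ‖ ≤ ‖A ξ‖ := by
      intro ξ
      by_contra hcon
      push_neg at hcon
      have hN : 0 < ‖ξ‖ := by
        rcases ((eq_or_lt_of_le (norm_nonneg ξ)).imp_left Eq.symm) with h | h
        · exfalso
          rw [h, mul_zero] at hcon
          exact absurd hcon (not_lt.mpr (norm_nonneg _))
        · exact h
      have hmainξ := main ξ
      have hD : 0 ≤ ‖A ξ‖ := norm_nonneg _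
      have hDN : ‖A ξ‖ * ‖ξ‖ < δ * ‖ξ‖ * ‖ξ‖ := by
        apply mul_lt_mul_of_pos_right hcon hN
      have hD2 : ‖A ξ‖ ^ 2 ≤ (δ * ‖ξ‖) ^ 2 := by
        apply pow_le_pow_left₀ hD hcon.le
      have hδhalf : 2 * δ ≤ 1 - x := by nlinarith
      nlinarith [mul_le_mul_of_nonneg_left hD2 hCtnn, mul_pos hN hN,
        mul_pos hδpos (mul_pos hN hN), sq_nonneg δ, mul_pos hδpos hδpos]
    have hsaA : IsSelfAdjoint A := by
      rw [IsSelfAdjoint, hAdef, star_sub]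
      congr 1
      · simp [Algebra.algebraMap_eq_smul_one, star_smul, Complex.star_def,
          Complex.conj_ofReal]
      · exact hz.omega_star hn
    rw [spectrum.notMem_iff]
    exact isUnit_of_selfAdjoint_bddBelow A hsaA δ hδpos hbdd
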